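/- Let 1 < q < ∞, v ∈ ℝⁿ with vᵢ > 0 for all i, and 0 < λ < ‖v‖_{q̄}. Define φ(c) = λ(Σᵢ (ωᵢ^{−1}(c))^q)^{(1−q)/q} − c for c ≥ 0, and let c̲ ≤ c̄ be as above. Then φ has exactly one root c* in [0, ∞), this root lies in [c̲, c̄], and the unique vector x with 0 < xᵢ < vᵢ satisfying xᵢ + c*·xᵢ^{q−1} = vᵢ for all i is the minimizer of g(x) = (1/2)‖x − v‖₂² + λ‖x‖_q. -/

import Mathlib

open scoped BigOperators

/-- The vector ℓq norm for a real exponent `q`. -/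
noncomputable def lqNormR {n : ℕ} (q : ℝ) (x : Fin n → ℝ) : ℝ :=
  (∑ i, |x i| ^ q) ^ (1 / q)

/-- The objective `g(x) = (1/2)‖x − v‖₂² + λ‖x‖_q`. -/
noncomputable def gObjR {n : ℕ} (q : ℝ) (lam : ℝ) (v x : Fin n → ℝ) : ℝ :=
  (1 / 2) * ∑ i, (x i - v i) ^ 2 + lam * lqNormR q x


/-- uniqueness of the positive root of `t + c t^{q-1} = v` -/
lemma uniqRoot (q c a b w : ℝ) (hq : 1 < q) (hc : 0 ≤ c) (ha : 0 < a) (hb : 0 < b)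
    (hav : a + c * a ^ (q - 1) = w) (hbv : b + c * b ^ (q - 1) = w) : a = b := by
  have hq1 : (0:ℝ) < q - 1 := by linarith
  rcases lt_trichotomy a b with h | h | h
  · have h1 : a ^ (q-1) ≤ b ^ (q-1) := Real.rpow_le_rpow ha.le h.le hq1.le
    have h2 : c * a ^ (q-1) ≤ c * b ^ (q-1) := mul_le_mul_of_nonneg_left h1 hc
    linarith
  · exact h
  · have h1 : b ^ (q-1) ≤ a ^ (q-1) := Real.rpow_le_rpow hb.le h.le hq1.le
    have h2 : c * b ^ (q-1) ≤ c * a ^ (q-1) := mul_le_mul_of_nonneg_left h1 hc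
    linarith

/-- monotonicity: larger `c` gives smaller root -/
lemma rootMono (q c₁ c₂ a₁ a₂ w : ℝ) (hq : 1 < q) (hc₁ : 0 ≤ c₁) (hc : c₁ ≤ c₂)
    (ha₁ : 0 < a₁) (ha₂ : 0 < a₂)
    (h₁ : a₁ + c₁ * a₁ ^ (q - 1) = w) (h₂ : a₂ + c₂ * a₂ ^ (q - 1) = w) : a₂ ≤ a₁ := by
  have hq1 : (0:ℝ) < q - 1 := by linarith
  by_contra hcon
  push_neg at hcon
  have h1 : a₁ ^ (q-1) ≤ a₂ ^ (q-1) := Real.rpow_le_rpow ha₁.le hcon.le hq1.le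
  have h2 : c₁ * a₁ ^ (q-1) ≤ c₂ * a₂ ^ (q-1) :=
    mul_le_mul hc h1 (Real.rpow_nonneg ha₁.le _) (hc₁.trans hc)
  linarith

/-- strict monotonicity -/
lemma rootStrictMono (q c₁ c₂ a₁ a₂ w : ℝ) (hq : 1 < q) (hc₁ : 0 ≤ c₁) (hc : c₁ < c₂)
    (ha₁ : 0 < a₁) (ha₂ : 0 < a₂)
    (h₁ : a₁ + c₁ * a₁ ^ (q - 1) = w) (h₂ : a₂ + c₂ * a₂ ^ (q - 1) = w) : a₂ < a₁ := by
  have hq1 : (0:ℝ) < q - 1 := by linarith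
  by_contra hcon
  push_neg at hcon
  have h1 : a₁ ^ (q-1) ≤ a₂ ^ (q-1) := Real.rpow_le_rpow ha₁.le hcon hq1.le
  have h3 : (0:ℝ) < a₂ ^ (q-1) := Real.rpow_pos_of_pos ha₂ _
  have h2 : c₁ * a₁ ^ (q-1) < c₂ * a₂ ^ (q-1) := by
    calc c₁ * a₁ ^ (q-1) ≤ c₁ * a₂ ^ (q-1) := mul_le_mul_of_nonneg_left h1 hc₁
    _ < c₂ * a₂ ^ (q-1) := by exact mul_lt_mul_of_pos_right hc h3
  linarith

/-- the central convexity/Hölder inequality: a positive stationary point is a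
(strong) minimizer of `g`. -/
lemma keyMin {n : ℕ} [NeZero n] (q : ℝ) (hq : 1 < q) (v : Fin n → ℝ)
    (lam : ℝ) (hlam : 0 < lam) (c : ℝ) (x : Fin n → ℝ) (hx : ∀ i, 0 < x i)
    (heq : ∀ i, x i + c * x i ^ (q - 1) = v i)
    (hcval : c = lam * (∑ i, x i ^ q) ^ ((1 - q) / q)) (y : Fin n → ℝ) :
    gObjR q lam v x + (1 / 2) * ∑ i, (y i - x i) ^ 2 ≤ gObjR q lam v y := by
  have hq0 : (0:ℝ) < q := by linarith
  have hq1 : (0:ℝ) < q - 1 := by linarith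
  set A := ∑ i, x i ^ q with hA_def
  have hA : 0 < A := Finset.sum_pos (fun i _ => Real.rpow_pos_of_pos (hx i) _)
    Finset.univ_nonempty
  have hc : 0 < c := by
    rw [hcval]; exact mul_pos hlam (Real.rpow_pos_of_pos hA _)
  -- lqNormR q x = A ^ (1/q)
  have hlx : lqNormR q x = A ^ (1/q) := by
    unfold lqNormR
    congr 1
    exact Finset.sum_congr rfl fun i _ => by rw [abs_of_pos (hx i)]
  set L := lqNormR q y with hL_def
  have hLnn : 0 ≤ L := Real.rpow_nonneg
    (Finset.sum_nonneg fun i _ => Real.rpow_nonneg (abs_nonneg _) _) _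
  -- Hölder
  have hconj : Real.HolderConjugate (q/(q-1)) q :=
    (Real.HolderConjugate.conjExponent hq).symm
  have hpow_eq : ∀ i, (x i ^ (q-1)) ^ (q/(q-1)) = x i ^ q := by
    intro i
    rw [← Real.rpow_mul (hx i).le]
    congr 1
    field_simp
  have habs : ∀ i, |x i ^ (q-1)| = x i ^ (q-1) :=
    fun i => abs_of_pos (Real.rpow_pos_of_pos (hx i) _)
  have holder : ∑ i, x i ^ (q-1) * |y i| ≤ A ^ ((q-1)/q) * L := by
    have h := Real.inner_le_Lp_mul_Lq (Finset.univ) (fun i => x i ^ (q-1))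
      (fun i => |y i|) hconj
    simp only [habs, abs_abs, hpow_eq] at h
    have h1 : (1:ℝ)/(q/(q-1)) = (q-1)/q := one_div_div _ _
    rw [h1] at h
    exact h
  have hsum1 : ∑ i, x i ^ (q-1) * y i ≤ ∑ i, x i ^ (q-1) * |y i| :=
    Finset.sum_le_sum fun i _ =>
      mul_le_mul_of_nonneg_left (le_abs_self _) (Real.rpow_pos_of_pos (hx i) _).le
  -- c * A^{(q-1)/q} = lam
  have hcA1 : c * A ^ ((q-1)/q) = lam := by
    rw [hcval, mul_assoc, ← Real.rpow_add hA]
    have : (1-q)/q + (q-1)/q = 0 := by ring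
    rw [this, Real.rpow_zero, mul_one]
  -- c * A = lam * A^{1/q}
  have hcA2 : c * A = lam * A ^ (1/q) := by
    rw [hcval, mul_assoc]
    congr 1
    have h2 : A ^ ((1-q)/q) * A = A ^ ((1-q)/q) * A ^ (1:ℝ) := by rw [Real.rpow_one]
    rw [h2, ← Real.rpow_add hA]
    congr 1
    field_simp
    ring
  -- x^{q-1} * x = x^q
  have hpow2 : ∀ i, x i ^ (q-1) * x i = x i ^ q := by
    intro i
    nth_rewrite 2 [show x i = x i ^ (1:ℝ) from (Real.rpow_one _).symm]
    rw [← Real.rpow_add (hx i)]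
    norm_num
  -- pointwise expansion
  have E1 : (1/2) * ∑ i, (y i - v i)^2 =
      (1/2) * ∑ i, (x i - v i)^2 + ∑ i, (x i - v i) * (y i - x i)
        + (1/2) * ∑ i, (y i - x i)^2 := by
    rw [Finset.mul_sum, Finset.mul_sum, Finset.mul_sum, ← Finset.sum_add_distrib,
      ← Finset.sum_add_distrib]
    exact Finset.sum_congr rfl fun i _ => by ring
  have E2 : ∑ i, (x i - v i) * (y i - x i) = c * A - c * ∑ i, x i ^ (q-1) * y i := by
    rw [hA_def, Finset.mul_sum, Finset.mul_sum, ← Finset.sum_sub_distrib]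
    refine Finset.sum_congr rfl fun i _ => ?_
    have h1 := heq i
    have h2 := hpow2 i
    linear_combination (y i - x i) * h1 + c * h2
  have hfin : c * ∑ i, x i ^ (q-1) * y i ≤ lam * L := by
    calc c * ∑ i, x i ^ (q-1) * y i ≤ c * ∑ i, x i ^ (q-1) * |y i| :=
          mul_le_mul_of_nonneg_left hsum1 hc.le
    _ ≤ c * (A ^ ((q-1)/q) * L) := mul_le_mul_of_nonneg_left holder hc.le
    _ = (c * A ^ ((q-1)/q)) * L := by ring
    _ = lam * L := by rw [hcA1]
  unfold gObjR
  rw [hlx, ← hL_def]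
  linarith [E1, E2, hfin, hcA2]


lemma scaledSum {n : ℕ} (p t : ℝ) (hp : 0 < p) (ht : 0 ≤ t) (u : Fin n → ℝ)
    (hu : ∀ i, 0 ≤ u i) :
    (∑ i, (t * u i) ^ p) ^ (1/p) = t * (∑ i, u i ^ p) ^ (1/p) := by
  have h1 : ∀ i : Fin n, (t * u i) ^ p = t ^ p * u i ^ p :=
    fun i => Real.mul_rpow ht (hu i)
  simp only [h1, ← Finset.mul_sum]
  rw [Real.mul_rpow (Real.rpow_nonneg ht _)
    (Finset.sum_nonneg fun i _ => Real.rpow_nonneg (hu i) _)]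
  congr 1
  rw [← Real.rpow_mul ht]
  rw [mul_one_div, div_self hp.ne', Real.rpow_one]

lemma sumRpowMono {n : ℕ} (p : ℝ) (hp : 0 ≤ p) (a b : Fin n → ℝ)
    (ha : ∀ i, 0 ≤ a i) (hab : ∀ i, a i ≤ b i) :
    (∑ i, a i ^ p) ^ (1/p) ≤ (∑ i, b i ^ p) ^ (1/p) := by
  refine Real.rpow_le_rpow (Finset.sum_nonneg fun i _ => Real.rpow_nonneg (ha i) _)
    (Finset.sum_le_sum fun i _ => Real.rpow_le_rpow (ha i) (hab i) hp)
    (by positivity)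

lemma phi_le_iff (q lam c S : ℝ) (hS : 0 < S) :
    lam * S ^ ((1-q)/q) ≤ c ↔ lam ≤ c * S ^ ((q-1)/q) := by
  have hZ : 0 < S ^ ((q-1)/q) := Real.rpow_pos_of_pos hS _
  rw [show (1-q)/q = -((q-1)/q) by ring, Real.rpow_neg hS.le, ← div_eq_mul_inv,
    div_le_iff₀ hZ]

lemma phi_ge_iff (q lam c S : ℝ) (hS : 0 < S) :
    c ≤ lam * S ^ ((1-q)/q) ↔ c * S ^ ((q-1)/q) ≤ lam := by
  have hZ : 0 < S ^ ((q-1)/q) := Real.rpow_pos_of_pos hS _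
  rw [show (1-q)/q = -((q-1)/q) by ring, Real.rpow_neg hS.le, ← div_eq_mul_inv,
    le_div_iff₀ hZ]

lemma winvCont (q : ℝ) (hq : 1 < q) (v : ℝ) (hv : 0 < v) (w : ℝ → ℝ)
    (hw : ∀ c, 0 ≤ c → 0 < w c ∧ w c ≤ v ∧ w c + c * w c ^ (q-1) = v) :
    ContinuousOn w (Set.Ici 0) := by
  have hq1 : (0:ℝ) < q - 1 := by linarith
  have key : ∀ c₁ c₂ : ℝ, 0 ≤ c₁ → c₁ ≤ c₂ →
      w c₂ ≤ w c₁ ∧ w c₁ - w c₂ ≤ (c₂ - c₁) * v ^ (q-1) := by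
    intro c₁ c₂ h₁ h₂
    obtain ⟨hp₁, hb₁, he₁⟩ := hw c₁ h₁
    obtain ⟨hp₂, hb₂, he₂⟩ := hw c₂ (h₁.trans h₂)
    have hmono : w c₂ ≤ w c₁ := rootMono q c₁ c₂ (w c₁) (w c₂) v hq h₁ h₂ hp₁ hp₂ he₁ he₂
    refine ⟨hmono, ?_⟩
    have hr1 : w c₂ ^ (q-1) ≤ w c₁ ^ (q-1) := Real.rpow_le_rpow hp₂.le hmono hq1.le
    have hr2 : w c₂ ^ (q-1) ≤ v ^ (q-1) := Real.rpow_le_rpow hp₂.le hb₂ hq1.le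
    have h3 : c₁ * w c₂ ^ (q-1) ≤ c₁ * w c₁ ^ (q-1) := mul_le_mul_of_nonneg_left hr1 h₁
    have h4 : (c₂ - c₁) * w c₂ ^ (q-1) ≤ (c₂ - c₁) * v ^ (q-1) :=
      mul_le_mul_of_nonneg_left hr2 (by linarith)
    nlinarith [he₁, he₂]
  refine LipschitzOnWith.continuousOn (K := Real.toNNReal (v ^ (q-1))) ?_
  refine LipschitzOnWith.of_dist_le_mul fun c₁ h₁ c₂ h₂ => ?_
  simp only [Set.mem_Ici] at h₁ h₂
  rw [Real.dist_eq, Real.dist_eq, Real.coe_toNNReal _ (Real.rpow_nonneg hv.le _)]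
  rcases le_total c₁ c₂ with h | h
  · obtain ⟨hm, hb⟩ := key c₁ c₂ h₁ h
    rw [abs_of_nonneg (by linarith), abs_of_nonpos (by linarith)]
    nlinarith
  · obtain ⟨hm, hb⟩ := key c₂ c₁ h₂ h
    rw [abs_of_nonpos (by linarith), abs_of_nonneg (by linarith)]
    nlinarith

set_option maxHeartbeats 1000000 in
/-- Let `1 < q < ∞`, `v ∈ ℝⁿ` with `vᵢ > 0`, and `0 < λ < ‖v‖_{q̄}`
(`q̄ = q/(q−1)`).  Define `φ(c) = λ(∑ᵢ (ωᵢ⁻¹(c))^q)^{(1−q)/q} − c` for `c ≥ 0`,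
where `ωᵢ⁻¹(c)` is the unique root in `(0, vᵢ]` of `x + c·x^{q−1} = vᵢ`, and
let `c̲ ≤ c̄` be as in the text.  Then `φ` has exactly one root `c*` in
`[0, ∞)`, this root lies in `[c̲, c̄]`, and the unique vector `x` with
`0 < xᵢ < vᵢ` satisfying `xᵢ + c*·xᵢ^{q−1} = vᵢ` for all `i` is the minimizer
of `g(x) = (1/2)‖x − v‖₂² + λ‖x‖_q`. -/
theorem stmt9 {n : ℕ} [NeZero n] (q : ℝ) (hq : 1 < q)
    (v : Fin n → ℝ) (hv : ∀ i, 0 < v i) (lam : ℝ)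
    (hlam : 0 < lam) (hlam' : lam < lqNormR (q / (q - 1)) v)
    (winv : Fin n → ℝ → ℝ)
    (hwinv : ∀ i, ∀ c : ℝ, 0 ≤ c →
      winv i c ∈ Set.Ioc (0 : ℝ) (v i) ∧
        winv i c + c * winv i c ^ (q - 1) = v i) :
    let eps : ℝ := (lqNormR (q / (q - 1)) v - lam) / lqNormR (q / (q - 1)) v
    let cc : Fin n → ℝ := fun i => (v i - v i * eps) / (v i * eps) ^ (q - 1)
    let clow : ℝ := Finset.univ.inf' Finset.univ_nonempty cc
    let cbar : ℝ := Finset.univ.sup' Finset.univ_nonempty cc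
    let phi : ℝ → ℝ := fun c => lam * (∑ i, winv i c ^ q) ^ ((1 - q) / q) - c
    ∃ cstar : ℝ, cstar ∈ Set.Icc clow cbar ∧ phi cstar = 0 ∧
      (∀ c : ℝ, 0 ≤ c → phi c = 0 → c = cstar) ∧
      ∀ x : Fin n → ℝ,
        ((∀ i, x i ∈ Set.Ioo (0 : ℝ) (v i)) ∧
            ∀ i, x i + cstar * x i ^ (q - 1) = v i) →
          ∀ y : Fin n → ℝ, gObjR q lam v x ≤ gObjR q lam v y := by
  intro eps cc clow cbar phi
  have hq0 : (0:ℝ) < q := by linarith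
  have hq1 : (0:ℝ) < q - 1 := by linarith
  have hp : (0:ℝ) < q / (q - 1) := div_pos hq0 hq1
  have hexp : (1:ℝ) / (q / (q-1)) = (q-1)/q := one_div_div _ _
  set N : ℝ := lqNormR (q / (q - 1)) v with hN_def
  have hN : 0 < N := hlam.trans hlam'
  have hNT : N = (∑ i, v i ^ (q/(q-1))) ^ (1/(q/(q-1))) := by
    rw [hN_def]; unfold lqNormR
    congr 1
    exact Finset.sum_congr rfl fun i _ => by rw [abs_of_pos (hv i)]
  have heps_def : eps = (N - lam) / N := rfl
  have heps_pos : 0 < eps := div_pos (by linarith) hN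
  have heps_lt1 : eps < 1 := by
    rw [heps_def, div_lt_one hN]; linarith
  have h1me : 1 - eps = lam / N := by
    rw [heps_def]; field_simp
    ring
  have hve_pos : ∀ i, 0 < v i * eps := fun i => mul_pos (hv i) heps_pos
  have hve_lt : ∀ i, v i * eps < v i := fun i => by
    nlinarith [hv i, heps_lt1, heps_pos]
  have hcc_def : ∀ i, cc i = (v i - v i * eps) / (v i * eps) ^ (q - 1) := fun i => rfl
  have hcc_pos : ∀ i, 0 < cc i := fun i => by
    rw [hcc_def i]
    exact div_pos (by nlinarith [hve_lt i]) (Real.rpow_pos_of_pos (hve_pos i) _)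
  have hccroot : ∀ i, v i * eps + cc i * (v i * eps) ^ (q - 1) = v i := by
    intro i
    rw [hcc_def i, div_mul_cancel₀ _ (Real.rpow_pos_of_pos (hve_pos i) _).ne']
    ring
  have hclow_le : ∀ i, clow ≤ cc i := fun i => Finset.inf'_le _ (Finset.mem_univ i)
  have hle_cbar : ∀ i, cc i ≤ cbar := fun i => Finset.le_sup' _ (Finset.mem_univ i)
  have hclow_pos : 0 < clow := by
    rw [show clow = Finset.univ.inf' Finset.univ_nonempty cc from rfl,
      Finset.lt_inf'_iff]
    exact fun i _ => hcc_pos i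
  obtain ⟨i0, -⟩ := (Finset.univ_nonempty : (Finset.univ : Finset (Fin n)).Nonempty)
  have hlowbar : clow ≤ cbar := (hclow_le i0).trans (hle_cbar i0)
  have hcbar_pos : 0 < cbar := hclow_pos.trans_le hlowbar
  -- bounds on the roots at the endpoints
  have hwlb : ∀ i, v i * eps ≤ winv i clow := fun i =>
    rootMono q clow (cc i) (winv i clow) (v i * eps) (v i) hq hclow_pos.le
      (hclow_le i) (hwinv i clow hclow_pos.le).1.1 (hve_pos i)
      (hwinv i clow hclow_pos.le).2 (hccroot i)
  have hwub : ∀ i, winv i cbar ≤ v i * eps := fun i =>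
    rootMono q (cc i) cbar (v i * eps) (winv i cbar) (v i) hq (hcc_pos i).le
      (hle_cbar i) (hve_pos i) (hwinv i cbar hcbar_pos.le).1.1
      (hccroot i) (hwinv i cbar hcbar_pos.le).2
  have hphi_def : ∀ c, phi c = lam * (∑ i, winv i c ^ q) ^ ((1 - q) / q) - c :=
    fun c => rfl
  have hSpos : ∀ c : ℝ, 0 ≤ c → 0 < ∑ i, winv i c ^ q := fun c hc =>
    Finset.sum_pos (fun i _ => Real.rpow_pos_of_pos ((hwinv i c hc).1.1) _)
      Finset.univ_nonempty
  have hpow_eq : ∀ (a : ℝ), 0 < a → (a ^ (q-1)) ^ (q/(q-1)) = a ^ q := by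
    intro a ha
    rw [← Real.rpow_mul ha.le]
    congr 1
    field_simp
  -- the scaled-norm representation of lam
  have hlamrep : lam = (∑ i, (lam / N * v i) ^ (q/(q-1))) ^ (1/(q/(q-1))) := by
    rw [scaledSum (q/(q-1)) (lam/N) hp (div_nonneg hlam.le hN.le) v
      (fun i => (hv i).le), ← hNT]
    field_simp
  -- generic endpoint computation:  c * S(c)^{(q-1)/q} as a scaled q̄-norm
  have hrep : ∀ c : ℝ, 0 < c →
      c * (∑ i, winv i c ^ q) ^ ((q-1)/q) =
        (∑ i, (c * winv i c ^ (q-1)) ^ (q/(q-1))) ^ (1/(q/(q-1))) := by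
    intro c hc
    rw [scaledSum (q/(q-1)) c hp hc.le (fun i => winv i c ^ (q-1))
      (fun i => (Real.rpow_pos_of_pos ((hwinv i c hc.le).1.1) _).le)]
    have : ∑ i, (winv i c ^ (q-1)) ^ (q/(q-1)) = ∑ i, winv i c ^ q :=
      Finset.sum_congr rfl fun i _ => hpow_eq _ ((hwinv i c hc.le).1.1)
    rw [this, hexp]
  -- sign at cbar
  have hbar_le : phi cbar ≤ 0 := by
    rw [hphi_def]
    have h1 : lam * (∑ i, winv i cbar ^ q) ^ ((1-q)/q) ≤ cbar := by
      rw [phi_le_iff q lam cbar _ (hSpos cbar hcbar_pos.le), hrep cbar hcbar_pos]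
      rw [hlamrep]
      refine sumRpowMono _ hp.le _ _
        (fun i => mul_nonneg (div_nonneg hlam.le hN.le) (hv i).le) (fun i => ?_)
      have he := (hwinv i cbar hcbar_pos.le).2
      have hb := hwub i
      have : lam / N * v i = v i - v i * eps := by
        rw [show v i - v i * eps = v i * (1 - eps) by ring, h1me]; ring
      linarith
    linarith
  -- sign at clow
  have hlow_ge : 0 ≤ phi clow := by
    rw [hphi_def]
    have h1 : clow ≤ lam * (∑ i, winv i clow ^ q) ^ ((1-q)/q) := by
      rw [phi_ge_iff q lam clow _ (hSpos clow hclow_pos.le), hrep clow hclow_pos]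
      rw [hlamrep]
      refine sumRpowMono _ hp.le _ _
        (fun i => mul_nonneg hclow_pos.le
          (Real.rpow_nonneg ((hwinv i clow hclow_pos.le).1.1).le _))
        (fun i => ?_)
      have he := (hwinv i clow hclow_pos.le).2
      have hb := hwlb i
      have : lam / N * v i = v i - v i * eps := by
        rw [show v i - v i * eps = v i * (1 - eps) by ring, h1me]; ring
      linarith
    linarith
  -- continuity of phi on [clow, cbar]
  have hsubset : Set.Icc clow cbar ⊆ Set.Ici (0:ℝ) := fun c hc => by
    simp only [Set.mem_Ici]; exact hclow_pos.le.trans hc.1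
  have hcont_w : ∀ i, ContinuousOn (winv i) (Set.Ici 0) := fun i =>
    winvCont q hq (v i) (hv i) (winv i) (fun c hc =>
      ⟨(hwinv i c hc).1.1, (hwinv i c hc).1.2, (hwinv i c hc).2⟩)
  have hScont : ContinuousOn (fun c => ∑ i, winv i c ^ q) (Set.Icc clow cbar) :=
    continuousOn_finset_sum _ fun i _ =>
      ((hcont_w i).mono hsubset).rpow_const (fun c _ => Or.inr hq0.le)
  have hphic : ContinuousOn phi (Set.Icc clow cbar) := by
    have : ContinuousOn (fun c => lam * (∑ i, winv i c ^ q) ^ ((1 - q) / q) - c)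
        (Set.Icc clow cbar) := by
      refine ContinuousOn.sub ?_ continuousOn_id
      exact continuousOn_const.mul (hScont.rpow_const fun c hc =>
        Or.inl (hSpos c (hsubset hc)).ne')
    exact this
  -- intermediate value theorem
  have h0mem : (0:ℝ) ∈ Set.Icc (phi cbar) (phi clow) := ⟨hbar_le, hlow_ge⟩
  obtain ⟨cstar, hcs_mem, hcs_root⟩ := intermediate_value_Icc' hlowbar hphic h0mem
  have hcs_pos : 0 < cstar := hclow_pos.trans_le hcs_mem.1
  -- data for keyMin from a root of phi
  have mk : ∀ c : ℝ, 0 < c → phi c = 0 →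
      (∀ i, 0 < winv i c) ∧ (∀ i, winv i c + c * winv i c ^ (q-1) = v i) ∧
        c = lam * (∑ i, winv i c ^ q) ^ ((1-q)/q) := by
    intro c hc hroot
    rw [hphi_def] at hroot
    exact ⟨fun i => (hwinv i c hc.le).1.1, fun i => (hwinv i c hc.le).2,
      by linarith⟩
  refine ⟨cstar, hcs_mem, hcs_root, ?_, ?_⟩
  · -- uniqueness of the root
    intro c hc0 hphic0
    have hcpos : 0 < c := by
      have h := hphic0
      rw [hphi_def] at h
      have : c = lam * (∑ i, winv i c ^ q) ^ ((1-q)/q) := by linarith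
      rw [this]
      exact mul_pos hlam (Real.rpow_pos_of_pos (hSpos c hc0) _)
    obtain ⟨hx1, hx2, hx3⟩ := mk c hcpos hphic0
    obtain ⟨hs1, hs2, hs3⟩ := mk cstar hcs_pos hcs_root
    have h1 := keyMin q hq v lam hlam c (fun i => winv i c) hx1 hx2 hx3
      (fun i => winv i cstar)
    have h2 := keyMin q hq v lam hlam cstar (fun i => winv i cstar) hs1 hs2 hs3
      (fun i => winv i c)
    have hswap : ∑ i, (winv i c - winv i cstar)^2 = ∑ i, (winv i cstar - winv i c)^2 :=
      Finset.sum_congr rfl fun i _ => by ring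
    have hsum_le : ∑ i, (winv i cstar - winv i c)^2 ≤ 0 := by linarith
    by_contra hne
    rcases lt_or_gt_of_ne hne with h | h
    · have hlt : winv i0 cstar < winv i0 c :=
        rootStrictMono q c cstar (winv i0 c) (winv i0 cstar) (v i0) hq hcpos.le h
          (hx1 i0) (hs1 i0) (hx2 i0) (hs2 i0)
      have : 0 < ∑ i, (winv i cstar - winv i c)^2 :=
        Finset.sum_pos' (fun i _ => sq_nonneg _)
          ⟨i0, Finset.mem_univ _, by
            have h' : winv i0 cstar - winv i0 c < 0 := by linarith
            nlinarith [h']⟩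
      linarith
    · have hlt : winv i0 c < winv i0 cstar :=
        rootStrictMono q cstar c (winv i0 cstar) (winv i0 c) (v i0) hq hcs_pos.le h
          (hs1 i0) (hx1 i0) (hs2 i0) (hx2 i0)
      have : 0 < ∑ i, (winv i cstar - winv i c)^2 :=
        Finset.sum_pos' (fun i _ => sq_nonneg _)
          ⟨i0, Finset.mem_univ _, by
            have h' : 0 < winv i0 cstar - winv i0 c := by linarith
            nlinarith [h']⟩
      linarith
  · -- minimizer property
    rintro x ⟨hxIoo, hxeq⟩ y
    obtain ⟨hs1, hs2, hs3⟩ := mk cstar hcs_pos hcs_root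
    have hxw : ∀ i, x i = winv i cstar := fun i =>
      uniqRoot q cstar (x i) (winv i cstar) (v i) hq hcs_pos.le (hxIoo i).1
        (hs1 i) (hxeq i) (hs2 i)
    have hcval : cstar = lam * (∑ i, x i ^ q) ^ ((1-q)/q) := by
      have hsum : ∑ i, x i ^ q = ∑ i, winv i cstar ^ q :=
        Finset.sum_congr rfl fun i _ => by rw [hxw i]
      rw [hsum]; exact hs3
    have h := keyMin q hq v lam hlam cstar x (fun i => (hxIoo i).1) hxeq hcval y
    have hnn : 0 ≤ ∑ i, (y i - x i)^2 :=
      Finset.sum_nonneg fun i _ => sq_nonneg _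
    linarith
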